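/- Let T be a finite simple graph with vertex set V and let n ∈ ℕ. Then χ̃(Hom(T,K_n)) = Σ_{∅ ≠ S ⊆ V} (−1)^{n+|S|} · χ̃(Ind(T[S]))^n. Expressed purely combinatorially: ( Σ_{η : V → Finset(Fin n), η x ≠ ∅ for all x, η x ∩ η y = ∅ whenever x,y adjacent in T} (−1)^{Σ_{x∈V} card(η x) − card V} ) − 1 = Σ_{∅ ≠ S ⊆ V} (−1)^{n+|S|} · ( − Σ_{I ⊆ S, I independent in T} (−1)^{card I} )^n. -/

import Mathlib

open Classical

private lemma neg_one_pow_sub (a b : ℕ) (h : b ≤ a) :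
    (-1 : ℤ) ^ (a - b) = (-1) ^ a * (-1) ^ b := by
  conv_rhs => rw [show a = (a - b) + b from (Nat.sub_add_cancel h).symm]
  rw [pow_add, mul_assoc, ← pow_add, Even.neg_one_pow ⟨b, rfl⟩, mul_one]

private lemma sum_superset_sign {V : Type*} [Fintype V] [DecidableEq V] (U : Finset V) :
    ∑ S ∈ Finset.univ.filter (fun S : Finset V => U ⊆ S), (-1 : ℤ) ^ S.card
      = if U = Finset.univ then (-1 : ℤ) ^ Fintype.card V else 0 := by
  have h : ∑ S ∈ Finset.univ.filter (fun S : Finset V => U ⊆ S), (-1 : ℤ) ^ S.card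
      = ∑ W ∈ Uᶜ.powerset, (-1 : ℤ) ^ (U ∪ W).card := by
    apply Finset.sum_nbij' (i := fun S => S \ U) (j := fun W => U ∪ W)
    · intro S hS
      simp only [Finset.mem_powerset, Finset.subset_iff, Finset.mem_sdiff,
        Finset.mem_compl]
      tauto
    · intro W hW
      simp [Finset.subset_union_left]
    · intro S hS
      simp only [Finset.mem_filter] at hS
      exact Finset.union_sdiff_of_subset hS.2
    · intro W hW
      simp only [Finset.mem_powerset] at hW
      have hd : Disjoint U W := by
        rw [Finset.disjoint_left]
        intro a ha haW
        have := hW haW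
        simp [ha] at this
      exact Finset.union_sdiff_cancel_left hd
    · intro S hS
      simp only [Finset.mem_filter] at hS
      rw [Finset.union_sdiff_of_subset hS.2]
  rw [h]
  have h2 : ∀ W ∈ Uᶜ.powerset, (-1 : ℤ) ^ (U ∪ W).card = (-1) ^ U.card * (-1) ^ W.card := by
    intro W hW
    simp only [Finset.mem_powerset] at hW
    have hd : Disjoint U W := by
      rw [Finset.disjoint_left]
      intro a ha haW
      have := hW haW
      simp [ha] at this
    rw [Finset.card_union_of_disjoint hd, pow_add]
  rw [Finset.sum_congr rfl h2, ← Finset.mul_sum, Finset.sum_powerset_neg_one_pow_card]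
  by_cases hU : U = Finset.univ
  · simp [hU, Finset.compl_eq_empty_iff, Finset.card_univ]
  · have : Uᶜ ≠ ∅ := by
      simp only [ne_eq, Finset.compl_eq_empty_iff]
      exact hU
    simp [hU, this]

/-- **Euler characteristic of `Hom(T,K_n)` via independence complexes
(Theorem 6.2 / `thm:chikn`).**
For a finite simple graph `T` with vertex set `V` and `n ∈ ℕ`,
`χ̃(Hom(T,K_n)) = Σ_{∅ ≠ S ⊆ V} (−1)^{n+|S|} χ̃(Ind(T[S]))^n`. -/
theorem cohomology_of_colorings_of_cycles_stmt1
    {V : Type*} [Fintype V] [DecidableEq V]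
    (T : SimpleGraph V) [DecidableRel T.Adj] (n : ℕ) :
    (∑ η ∈ Finset.univ.filter (fun η : V → Finset (Fin n) =>
        (∀ x, η x ≠ ∅) ∧ ∀ x y, T.Adj x y → η x ∩ η y = ∅),
      (-1 : ℤ) ^ ((∑ x, (η x).card) - Fintype.card V)) - 1
    = ∑ S ∈ Finset.univ.filter (fun S : Finset V => S ≠ ∅),
        (-1 : ℤ) ^ (n + S.card) *
        (- ∑ I ∈ S.powerset.filter (fun I : Finset V => ∀ x ∈ I, ∀ y ∈ I, ¬ T.Adj x y),
            (-1 : ℤ) ^ I.card) ^ n := by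
  classical
  set P : Finset V → Prop := fun I => ∀ x ∈ I, ∀ y ∈ I, ¬ T.Adj x y with hPdef
  set a : Finset V → ℤ := fun S => ∑ I ∈ S.powerset.filter P, (-1 : ℤ) ^ I.card with hadef
  -- Step 1: simplify the RHS summand
  have hterm : ∀ S : Finset V, (-1 : ℤ) ^ (n + S.card) * (- a S) ^ n
      = (-1 : ℤ) ^ S.card * (a S) ^ n := by
    intro S
    calc (-1 : ℤ) ^ (n + S.card) * (- a S) ^ n
        = ((-1 : ℤ) ^ n * (-1) ^ n) * ((-1) ^ S.card * (a S) ^ n) := by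
          rw [neg_pow, pow_add]; ring
      _ = (-1 : ℤ) ^ S.card * (a S) ^ n := by
          rw [← pow_add, Even.neg_one_pow ⟨n, rfl⟩, one_mul]
  -- Step 2: RHS = (sum over all S) - 1
  have hRHS : ∑ S ∈ Finset.univ.filter (fun S : Finset V => S ≠ ∅),
        (-1 : ℤ) ^ (n + S.card) * (- a S) ^ n
      = (∑ S : Finset V, (-1 : ℤ) ^ S.card * (a S) ^ n) - 1 := by
    rw [Finset.sum_congr rfl (fun S _ => hterm S)]
    rw [Finset.filter_ne', Finset.sum_erase_eq_sub (Finset.mem_univ ∅)]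
    congr 1
    have h1 : a ∅ = 1 := by
      simp only [hadef, Finset.powerset_empty]
      rw [Finset.filter_true_of_mem (fun x hx => by
        simp only [Finset.mem_singleton] at hx
        subst hx
        intro u hu
        simp at hu)]
      simp
    simp [h1]
  rw [show (∑ S ∈ Finset.univ.filter (fun S : Finset V => S ≠ ∅),
        (-1 : ℤ) ^ (n + S.card) *
        (- ∑ I ∈ S.powerset.filter (fun I : Finset V => ∀ x ∈ I, ∀ y ∈ I, ¬ T.Adj x y),
            (-1 : ℤ) ^ I.card) ^ n)
      = ∑ S ∈ Finset.univ.filter (fun S : Finset V => S ≠ ∅),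
        (-1 : ℤ) ^ (n + S.card) * (- a S) ^ n from rfl, hRHS]
  rw [sub_left_inj]
  -- Step 3: expand (a S)^n as a sum over tuples of independent sets
  have hpow : ∀ S : Finset V, (a S) ^ n
      = ∑ p ∈ Fintype.piFinset (fun _ : Fin n => S.powerset.filter P),
          ∏ i, (-1 : ℤ) ^ (p i).card := fun S => Finset.sum_pow' _ _ n
  have hset : ∀ S : Finset V, Fintype.piFinset (fun _ : Fin n => S.powerset.filter P)
      = (Fintype.piFinset (fun _ : Fin n => Finset.univ.filter P)).filter
          (fun p => ∀ i, p i ⊆ S) := by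
    intro S
    ext p
    simp only [Fintype.mem_piFinset, Finset.mem_filter, Finset.mem_powerset, Finset.mem_univ,
      true_and]
    exact ⟨fun h => ⟨fun i => (h i).2, fun i => (h i).1⟩, fun h i => ⟨h.2 i, h.1 i⟩⟩
  -- Step 4: inclusion-exclusion over S
  have key2 : (∑ S : Finset V, (-1 : ℤ) ^ S.card * a S ^ n)
      = ∑ p ∈ (Fintype.piFinset (fun _ : Fin n => Finset.univ.filter P)).filter
          (fun p => Finset.univ.sup p = Finset.univ),
          (-1 : ℤ) ^ Fintype.card V * ∏ i, (-1 : ℤ) ^ (p i).card := by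
    have hinner : ∀ p : Fin n → Finset V,
        (∑ S : Finset V, if (∀ i, p i ⊆ S) then (-1 : ℤ) ^ S.card * ∏ i, (-1 : ℤ) ^ (p i).card
          else 0)
        = (if Finset.univ.sup p = Finset.univ then (-1 : ℤ) ^ Fintype.card V else 0) *
            ∏ i, (-1 : ℤ) ^ (p i).card := by
      intro p
      have h1 : ∀ S : Finset V, (∀ i, p i ⊆ S) ↔ Finset.univ.sup p ⊆ S := by
        intro S
        constructor
        · intro h
          exact Finset.sup_le fun i _ => h i
        · intro h i
          exact le_trans (Finset.le_sup (Finset.mem_univ i)) h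
      simp_rw [h1]
      rw [← sum_superset_sign (Finset.univ.sup p), Finset.sum_filter, Finset.sum_mul]
      exact Finset.sum_congr rfl fun S _ => by split <;> simp
    simp_rw [hpow, hset, Finset.mul_sum, Finset.sum_filter]
    rw [Finset.sum_comm]
    rw [Finset.sum_congr rfl fun p _ => hinner p]
    exact Finset.sum_congr rfl fun p _ => by split <;> simp
  rw [key2]
  -- Step 5: biject η's with surjective tuples of independent sets
  apply Finset.sum_nbij' (i := fun η i => Finset.univ.filter (fun x => i ∈ η x))
    (j := fun p x => Finset.univ.filter (fun i => x ∈ p i))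
  case hi =>
    intro η hη
    simp only [Finset.mem_filter, Finset.mem_univ, true_and] at hη
    simp only [Finset.mem_filter, Fintype.mem_piFinset, Finset.mem_univ, true_and]
    constructor
    · intro i
      intro x hx y hy hadj
      simp only [Finset.mem_filter, Finset.mem_univ, true_and] at hx hy
      have : i ∈ η x ∩ η y := Finset.mem_inter.2 ⟨hx, hy⟩
      rw [hη.2 x y hadj] at this
      exact absurd this (Finset.notMem_empty i)
    · ext x
      simp only [Finset.mem_sup, Finset.mem_filter, Finset.mem_univ, true_and, iff_true]
      obtain ⟨i, hi⟩ := Finset.nonempty_iff_ne_empty.2 (hη.1 x)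
      exact ⟨i, hi⟩
  case hj =>
    intro p hp
    simp only [Finset.mem_filter, Fintype.mem_piFinset, Finset.mem_univ, true_and] at hp
    simp only [Finset.mem_filter, Finset.mem_univ, true_and]
    constructor
    · intro x
      rw [← Finset.nonempty_iff_ne_empty]
      have hx : x ∈ Finset.univ.sup p := by rw [hp.2]; exact Finset.mem_univ x
      obtain ⟨i, _, hi⟩ := Finset.mem_sup.1 hx
      exact ⟨i, by simp [hi]⟩
    · intro x y hadj
      ext i
      simp only [Finset.mem_inter, Finset.mem_filter, Finset.mem_univ, true_and,
        Finset.notMem_empty, iff_false, not_and]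
      intro hx hy
      exact hp.1 i x hx y hy hadj
  case left_neg =>
    intro η hη
    funext x
    ext i
    simp
  case right_neg =>
    intro p hp
    funext i
    ext x
    simp
  case h =>
    intro η hη
    simp only [Finset.mem_filter, Finset.mem_univ, true_and] at hη
    have hcard : ∀ x, (η x).card ≥ 1 :=
      fun x => Finset.card_pos.2 (Finset.nonempty_iff_ne_empty.2 (hη.1 x))
    have hle : Fintype.card V ≤ ∑ x, (η x).card := by
      rw [← Finset.card_univ, Finset.card_eq_sum_ones]
      exact Finset.sum_le_sum fun x _ => hcard x
    have hsum : ∑ i : Fin n, (Finset.univ.filter (fun x => i ∈ η x)).card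
        = ∑ x, (η x).card := by
      simp_rw [Finset.card_filter]
      rw [Finset.sum_comm]
      refine Finset.sum_congr rfl fun x _ => ?_
      rw [← Finset.card_filter, Finset.filter_univ_mem]
    rw [Finset.prod_pow_eq_pow_sum, hsum, neg_one_pow_sub _ _ hle, mul_comm]
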